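/- Let φ be a fixed-point-free automorphism of a finite solvable group G. Then for every set of primes π, G has a φ-invariant Hall π-subgroup. -/

import Mathlib

open Subgroup MulOpposite MulAction Pointwise
open scoped commutatorElement

section Helpers

variable {G : Type*} [Group G]

theorem fpf_inj' (φ : G ≃* G) (hfpf : ∀ g : G, φ g = g → g = 1)
    {g h : G} (e : (φ g)⁻¹ * g = (φ h)⁻¹ * h) : g = h := by
  have key : φ (h * g⁻¹) = h * g⁻¹ := by
    rw [map_mul, map_inv]
    have e' := congrArg (fun x => φ h * x * g⁻¹) e
    simp only [mul_assoc, mul_inv_cancel, mul_one, inv_mul_cancel_left] at e'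
    simpa using e'
  exact (mul_inv_eq_one.mp (hfpf _ key)).symm

theorem fpf_surj [Finite G] (φ : G ≃* G)
    (hfpf : ∀ g : G, φ g = g → g = 1) {N : Subgroup G} (hN : N.map φ.toMonoidHom = N)
    {n : G} (hn : n ∈ N) : ∃ m ∈ N, (φ m)⁻¹ * m = n := by
  have hmem : ∀ m : G, m ∈ N → φ m ∈ N := by
    intro m hm
    rw [← hN]; exact ⟨m, hm, rfl⟩
  let f : N → N := fun m => ⟨(φ (m : G))⁻¹ * m, N.mul_mem (N.inv_mem (hmem _ m.2)) m.2⟩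
  have hinj : Function.Injective f := by
    intro a b hab
    exact Subtype.ext (fpf_inj' φ hfpf (congrArg Subtype.val hab))
  obtain ⟨m, hm⟩ := Finite.surjective_of_injective hinj ⟨n, hn⟩
  exact ⟨m, m.2, congrArg Subtype.val hm⟩

theorem fpf_quot [Finite G] (φ : G ≃* G)
    (hfpf : ∀ g : G, φ g = g → g = 1) {N : Subgroup G} [N.Normal]
    (hN : N.map φ.toMonoidHom = N) :
    ∀ x : G ⧸ N, QuotientGroup.congr N N φ hN x = x → x = 1 := by
  have hmem : ∀ m : G, m ∈ N → φ m ∈ N := fun m hm => by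
    rw [← hN]; exact ⟨m, hm, rfl⟩
  set S : Set G := {g : G | (φ g)⁻¹ * g ∈ N} with hS
  have hNS : (N : Set G) ⊆ S := fun n hn =>
    N.mul_mem (N.inv_mem (hmem _ hn)) hn
  have hcard : Nat.card S ≤ Nat.card N := by
    have : Function.Injective (fun g : S => (⟨(φ (g : G))⁻¹ * g, g.2⟩ : N)) := by
      intro a b hab
      exact Subtype.ext (fpf_inj' φ hfpf (congrArg Subtype.val hab))
    exact Nat.card_le_card_of_injective _ this
  have hSN : S = (N : Set G) := by
    refine (Set.eq_of_subset_of_ncard_le hNS ?_ (Set.toFinite S)).symm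
    rw [← Nat.card_coe_set_eq, ← Nat.card_coe_set_eq]
    simpa using hcard
  intro x hx
  induction x using QuotientGroup.induction_on with
  | H g =>
    rw [QuotientGroup.congr_mk N N φ hN g] at hx
    have hg : g ∈ S := by
      have : (QuotientGroup.mk (φ g) : G ⧸ N) = QuotientGroup.mk g := hx
      exact QuotientGroup.leftRel_apply.mp (Quotient.exact' this)
    rw [hSN] at hg
    exact (QuotientGroup.eq_one_iff g).mpr hg

theorem conj_complements [Finite G] {N K K' : Subgroup G}
    [N.Normal] [IsMulCommutative N] (hco : Nat.Coprime (Nat.card N) N.index)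
    (h : IsComplement' N K) (h' : IsComplement' N K') :
    ∃ n ∈ N, K.map (MulAut.conj n).toMonoidHom = K' := by
  have key : ∀ (L : Subgroup G) (_ : IsComplement' N L),
      ∃ α : N.QuotientDiff, stabilizer G α = L := by
    intro L hL
    have hT0 : IsComplement (L : Set G) (N : Set G) := isComplement'_def.mp hL.symm
    have hT : IsComplement (L : Set G) (N : Set G) := hT0
    let T : N.LeftTransversal := ⟨(L : Set G), hT⟩
    let αT : N.QuotientDiff := Quotient.mk'' T
    refine ⟨αT, ?_⟩
    have hle : L ≤ stabilizer G αT := by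
      intro g hg
      rw [mem_stabilizer_iff]
      have step : g • αT = Quotient.mk'' (op g⁻¹ • T) := rfl
      rw [step]
      congr 1
      refine Subtype.ext ?_
      show (op g⁻¹ • (L : Set G)) = (L : Set G)
      ext x
      constructor
      · rintro ⟨y, hy, rfl⟩
        show y * g⁻¹ ∈ L
        exact L.mul_mem hy (L.inv_mem hg)
      · intro hx
        exact ⟨x * g, L.mul_mem hx hg, by simp [smul_eq_mul_unop, mul_assoc]⟩
    have hstab : IsComplement' N (stabilizer G αT) :=
      isComplement'_stabilizer_of_coprime hco
    have hcard : Nat.card (stabilizer G αT) = Nat.card L := by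
      rw [← hstab.symm.index_eq_card, ← hL.symm.index_eq_card]
    have heq : (L : Set G) = (stabilizer G αT : Set G) := by
      apply Set.eq_of_subset_of_ncard_le hle
      · rw [← Nat.card_coe_set_eq, ← Nat.card_coe_set_eq]
        exact le_of_eq hcard
    exact (SetLike.coe_injective heq).symm
  obtain ⟨α, hα⟩ := key K h
  obtain ⟨β, hβ⟩ := key K' h'
  obtain ⟨n, hn⟩ := Subgroup.exists_smul_eq hco α β
  refine ⟨(n : G), n.2, ?_⟩
  rw [← hα, ← hβ, ← hn]
  have hns : n • α = (n : G) • α := rfl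
  rw [hns, stabilizer_smul_eq_stabilizer_map_conj]

end Helpers

theorem hall_aux (n : ℕ) : ∀ (G : Type*) [Group G] [Finite G] [Group.IsSolvable G] (φ : G ≃* G),
    (∀ g : G, φ g = g → g = 1) → Nat.card G ≤ n → ∀ π : Set ℕ,
    ∃ H : Subgroup G,
      (∀ p : ℕ, p.Prime → p ∣ Nat.card H → p ∈ π) ∧
      (∀ p : ℕ, p.Prime → p ∣ H.index → p ∉ π) ∧
      H.map φ.toMonoidHom = H := by
  induction n with
  | zero =>
    intro G _ _ _ φ hfpf hle π
    have := Nat.card_pos (α := G)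
    omega
  | succ n ih =>
    intro G _ _ _ φ hfpf hle π
    by_cases hG1 : Nat.card G = 1
    · refine ⟨⊥, ?_, ?_, Subgroup.map_bot _⟩
      · intro p hp hdvd
        rw [Subgroup.card_bot, Nat.dvd_one] at hdvd
        exact absurd hdvd hp.ne_one
      · intro p hp hdvd
        rw [Subgroup.index_bot, hG1, Nat.dvd_one] at hdvd
        exact absurd (hdvd ▸ hp) Nat.not_prime_one
    -- find the last nontrivial term of the derived series
    obtain ⟨m, hm⟩ := Group.IsSolvable.solvable (G := G)
    have h0 : derivedSeries G 0 ≠ ⊥ := by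
      rw [derivedSeries_zero]
      intro h
      have : Nat.card (⊤ : Subgroup G) = 1 := by rw [h, Subgroup.card_bot]
      rw [Subgroup.card_top] at this
      exact hG1 this
    have hex : ∃ k, derivedSeries G (k + 1) = ⊥ ∧ derivedSeries G k ≠ ⊥ := by
      induction m with
      | zero => exact absurd hm h0
      | succ m ihm =>
        by_cases h : derivedSeries G m = ⊥
        · exact ihm h
        · exact ⟨m, hm, h⟩
    obtain ⟨k, hk1, hk0⟩ := hex
    set A := derivedSeries G k with hA
    have hAnormal : A.Normal := derivedSeries_normal G k
    have hAcomm : ∀ a ∈ A, ∀ b ∈ A, a * b = b * a := by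
      intro a ha b hb
      have : ⁅a, b⁆ ∈ (⊥ : Subgroup G) := by
        rw [← hk1, derivedSeries_succ]
        exact Subgroup.commutator_mem_commutator ha hb
      rw [Subgroup.mem_bot, commutatorElement_eq_one_iff_mul_comm] at this
      exact this
    have hAmap : A.map φ.toMonoidHom = A := map_derivedSeries_eq φ.surjective k
    have hAone : Nat.card A ≠ 1 := fun h => hk0 (Subgroup.card_eq_one.mp h)
    set p := (Nat.card A).minFac with hp
    have hpp : p.Prime := Nat.minFac_prime hAone
    have hpdvd : p ∣ Nat.card A := Nat.minFac_dvd _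
    haveI : Fact p.Prime := ⟨hpp⟩
    -- the subgroup of p-torsion elements of A
    set N : Subgroup G :=
      { carrier := {g : G | g ∈ A ∧ g ^ p = 1}
        one_mem' := ⟨A.one_mem, one_pow p⟩
        mul_mem' := by
          rintro a b ⟨ha, hpa⟩ ⟨hb, hpb⟩
          refine ⟨A.mul_mem ha hb, ?_⟩
          rw [Commute.mul_pow (hAcomm a ha b hb), hpa, hpb, one_mul]
        inv_mem' := by
          rintro a ⟨ha, hpa⟩
          exact ⟨A.inv_mem ha, by rw [inv_pow, hpa, inv_one]⟩ } with hNdef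
    have hNmem : ∀ g : G, g ∈ N ↔ g ∈ A ∧ g ^ p = 1 := fun g => Iff.rfl
    haveI hNnormal : N.Normal := by
      constructor
      intro g hg x
      refine ⟨hAnormal.conj_mem g ((hNmem g).mp hg).1 x, ?_⟩
      rw [conj_pow, ((hNmem g).mp hg).2, mul_one, mul_inv_cancel]
    have hNmap : N.map φ.toMonoidHom = N := by
      ext x
      constructor
      · rintro ⟨g, hg, rfl⟩
        refine ⟨?_, ?_⟩
        · rw [← hAmap]; exact ⟨g, hg.1, rfl⟩
        · show φ.toMonoidHom g ^ p = 1
          rw [← map_pow, hg.2, map_one]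
      · rintro ⟨hxA, hxp⟩
        refine ⟨φ.symm x, ⟨?_, ?_⟩, φ.apply_symm_apply x⟩
        · rw [← hAmap] at hxA
          obtain ⟨a, ha, haa⟩ := hxA
          have : φ.symm x = a := by rw [← haa]; exact φ.symm_apply_apply a
          rw [this]; exact ha
        · rw [← map_pow, hxp, map_one]
    have hNcomm : IsMulCommutative N :=
      ⟨⟨fun a b => Subtype.ext (hAcomm a a.2.1 b b.2.1)⟩⟩
    haveI := hNcomm
    -- N is nontrivial
    have hNne : N ≠ ⊥ := by
      obtain ⟨a, ha⟩ := exists_prime_orderOf_dvd_card' (G := A) p hpdvd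
      intro h
      have haN : (a : G) ∈ N := by
        refine ⟨a.2, ?_⟩
        have : (a ^ p : A) = 1 := by rw [← ha, pow_orderOf_eq_one]
        exact congrArg Subtype.val this
      rw [h, Subgroup.mem_bot] at haN
      have : a = 1 := Subtype.ext haN
      rw [this, orderOf_one] at ha
      exact hpp.ne_one ha.symm
    have hNp : IsPGroup p N := fun g => ⟨1, by
      rw [pow_one]
      exact Subtype.ext g.2.2⟩
    obtain ⟨a, hNcard⟩ := (IsPGroup.iff_card).mp hNp
    have hNcard2 : 2 ≤ Nat.card N := by
      rcases Nat.lt_or_ge (Nat.card N) 2 with h | h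
      · have h1 := Nat.card_pos (α := N)
        have h2 : Nat.card N = 1 := by omega
        exact absurd (Subgroup.card_eq_one.mp h2) hNne
      · exact h
    -- quotient
    set Q := G ⧸ N with hQ
    set φQ := QuotientGroup.congr N N φ hNmap with hφQ
    have hfpfQ : ∀ x : Q, φQ x = x → x = 1 := fpf_quot φ hfpf hNmap
    have hGcard : Nat.card G = Nat.card Q * Nat.card N :=
      Subgroup.card_eq_card_quotient_mul_card_subgroup N
    have hQpos : 0 < Nat.card Q := Nat.card_pos
    have hQle : Nat.card Q ≤ n := by nlinarith [hGcard, hle, hQpos, hNcard2]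
    obtain ⟨K, hK1, hK2, hK3⟩ := ih Q φQ hfpfQ hQle π
    set mk : G →* Q := QuotientGroup.mk' N with hmk
    have hmksurj : Function.Surjective mk := QuotientGroup.mk'_surjective N
    set Hc : Subgroup G := K.comap mk with hHc
    have hcommute : ∀ g : G, φQ (mk g) = mk (φ g) := fun g => rfl
    have hcompeq : mk.comp φ.symm.toMonoidHom = φQ.symm.toMonoidHom.comp mk := by
      ext g
      show mk (φ.symm g) = φQ.symm (mk g)
      apply φQ.injective
      show φQ (mk (φ.symm g)) = φQ (φQ.symm (mk g))
      rw [hcommute, φ.apply_symm_apply, MulEquiv.apply_symm_apply]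
    have hKcomap : K.comap φQ.symm.toMonoidHom = K := by
      rw [← map_equiv_eq_comap_symm', hK3]
    have hHmap : Hc.map φ.toMonoidHom = Hc := by
      rw [hHc, map_equiv_eq_comap_symm', Subgroup.comap_comap, hcompeq,
        ← Subgroup.comap_comap, hKcomap]
    have hHindex : Hc.index = K.index := K.index_comap_of_surjective hmksurj
    have hKidxpos : 0 < K.index := Nat.pos_of_ne_zero K.index_ne_zero_of_finite
    have hHcard : Nat.card Hc = Nat.card N * Nat.card K := by
      have e1 : Nat.card Hc * Hc.index = Nat.card G := Subgroup.card_mul_index _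
      have e2 : Nat.card K * K.index = Nat.card Q := Subgroup.card_mul_index _
      rw [hHindex] at e1
      apply Nat.eq_of_mul_eq_mul_right hKidxpos
      rw [e1, hGcard, ← e2]; ring
    by_cases hpπ : p ∈ π
    · refine ⟨Hc, ?_, ?_, hHmap⟩
      · intro q hq hdvd
        rw [hHcard, hNcard] at hdvd
        rcases (Nat.Prime.dvd_mul hq).mp hdvd with h | h
        · have h' := hq.dvd_of_dvd_pow h
          rwa [(Nat.prime_dvd_prime_iff_eq hq hpp).mp h']
        · exact hK1 q hq h
      · intro q hq hdvd
        rw [hHindex] at hdvd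
        exact hK2 q hq hdvd
    · by_cases hHtop : Hc = ⊤
      · -- Q is a π-group; apply Schur–Zassenhaus and fix up the complement
        have hHcardG : Nat.card Hc = Nat.card G := by rw [hHtop, Subgroup.card_top]
        have hNpos : 0 < Nat.card N := Nat.card_pos
        have hKQ : Nat.card K = Nat.card Q := by
          have h' : Nat.card N * Nat.card K = Nat.card N * Nat.card Q := by
            rw [← hHcard, hHcardG, hGcard]; ring
          exact Nat.eq_of_mul_eq_mul_left hNpos h'
        have hπQ : ∀ q : ℕ, q.Prime → q ∣ Nat.card Q → q ∈ π := fun q hq hd =>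
          hK1 q hq (hKQ ▸ hd)
        have hNidx : N.index = Nat.card Q := Subgroup.index_eq_card N
        have hpQ : ¬ p ∣ Nat.card Q := fun hd => hpπ (hπQ p hpp hd)
        have hco : Nat.Coprime (Nat.card N) N.index := by
          rw [hNcard, hNidx]
          exact Nat.Coprime.pow_left a ((Nat.Prime.coprime_iff_not_dvd hpp).mpr hpQ)
        obtain ⟨K0, hK0⟩ := Subgroup.exists_right_complement'_of_coprime hco
        have hφinj : Function.Injective φ.toMonoidHom := fun x y h => φ.injective h
        have hK1card : Nat.card (K0.map φ.toMonoidHom) = Nat.card K0 :=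
          (Nat.card_congr (Subgroup.equivMapOfInjective K0 φ.toMonoidHom hφinj).toEquiv).symm
        have hK1comp : IsComplement' N (K0.map φ.toMonoidHom) := by
          apply Subgroup.isComplement'_of_card_mul_and_disjoint
          · rw [hK1card]; exact hK0.card_mul
          · rw [disjoint_iff]
            have hmi : (N ⊓ K0).map φ.toMonoidHom = N ⊓ K0.map φ.toMonoidHom := by
              rw [Subgroup.map_inf _ _ _ hφinj, hNmap]
            rw [← hmi, disjoint_iff.mp hK0.disjoint, Subgroup.map_bot]
        obtain ⟨nn, hnnN, hnnconj⟩ := conj_complements hco hK0 hK1comp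
        obtain ⟨mm, hmmN, hmmEq⟩ := fpf_surj φ hfpf hNmap hnnN
        refine ⟨K0.map (MulAut.conj mm).toMonoidHom, ?_, ?_, ?_⟩
        · intro q hq hdvd
          have hcard0 : Nat.card (K0.map (MulAut.conj mm).toMonoidHom) = Nat.card K0 :=
            (Nat.card_congr (Subgroup.equivMapOfInjective K0 _
              (MulAut.conj mm).injective).toEquiv).symm
          have hK0card : Nat.card K0 = Nat.card Q := by
            rw [← hK0.symm.index_eq_card, hNidx]
          rw [hcard0, hK0card] at hdvd
          exact hπQ q hq hdvd
        · intro q hq hdvd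
          have hcard0 : Nat.card (K0.map (MulAut.conj mm).toMonoidHom) = Nat.card K0 :=
            (Nat.card_congr (Subgroup.equivMapOfInjective K0 _
              (MulAut.conj mm).injective).toEquiv).symm
          have hK0card : Nat.card K0 = Nat.card Q := by
            rw [← hK0.symm.index_eq_card, hNidx]
          have e1 : Nat.card (K0.map (MulAut.conj mm).toMonoidHom) *
              (K0.map (MulAut.conj mm).toMonoidHom).index = Nat.card G :=
            Subgroup.card_mul_index _
          rw [hcard0, hK0card, hGcard] at e1
          have hidx : (K0.map (MulAut.conj mm).toMonoidHom).index = Nat.card N :=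
            Nat.eq_of_mul_eq_mul_left hQpos e1
          rw [hidx, hNcard] at hdvd
          have h' := hq.dvd_of_dvd_pow hdvd
          rw [(Nat.prime_dvd_prime_iff_eq hq hpp).mp h']
          exact hpπ
        · have hmmmul : φ mm * nn = mm := by
            rw [← hmmEq, ← mul_assoc, mul_inv_cancel, one_mul]
          have c1 : φ.toMonoidHom.comp (MulAut.conj mm).toMonoidHom =
              (MulAut.conj (φ mm)).toMonoidHom.comp φ.toMonoidHom := by
            ext x
            simp [MulAut.conj_apply]
          have c2 : (MulAut.conj (φ mm)).toMonoidHom.comp (MulAut.conj nn).toMonoidHom =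
              (MulAut.conj mm).toMonoidHom := by
            ext x
            simp only [MonoidHom.comp_apply, MulAut.conj_apply, MulEquiv.coe_toMonoidHom]
            conv_rhs => rw [← hmmmul]
            group
          rw [Subgroup.map_map, c1, ← Subgroup.map_map, ← hnnconj, Subgroup.map_map, c2]
      · -- Hc is a proper subgroup; recurse inside Hc
        have hidx1 : Hc.index ≠ 1 := fun h => hHtop (Subgroup.index_eq_one.mp h)
        have hidx0 : Hc.index ≠ 0 := Hc.index_ne_zero_of_finite
        have hHcpos : 0 < Nat.card Hc := Nat.card_pos
        have e3 : Nat.card Hc * Hc.index = Nat.card G := Subgroup.card_mul_index _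
        have h2c : 2 * Nat.card Hc ≤ Nat.card G := by
          calc 2 * Nat.card Hc ≤ Hc.index * Nat.card Hc :=
                Nat.mul_le_mul_right _ (by omega)
            _ = Nat.card G := by rw [mul_comm]; exact e3
        have hHccard_le : Nat.card Hc ≤ n := by omega
        set φH : Hc ≃* Hc := (φ.subgroupMap Hc).trans (MulEquiv.subgroupCongr hHmap)
          with hφH
        have hφHcoe : ∀ x : Hc, ((φH x : G)) = φ (x : G) := fun x => rfl
        have hfpfH : ∀ x : Hc, φH x = x → x = 1 := by
          intro x hx
          refine Subtype.ext (hfpf _ ?_)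
          rw [← hφHcoe]
          exact congrArg Subtype.val hx
        obtain ⟨L', hL1, hL2, hL3⟩ := ih Hc φH hfpfH hHccard_le π
        have hLcard : Nat.card (L'.map Hc.subtype) = Nat.card L' :=
          (Nat.card_congr (Subgroup.equivMapOfInjective L' Hc.subtype
            Hc.subtype_injective).toEquiv).symm
        have hL'pos : 0 < Nat.card L' := Nat.card_pos
        have hLindex : (L'.map Hc.subtype).index = L'.index * Hc.index := by
          have e1 : Nat.card (L'.map Hc.subtype) * (L'.map Hc.subtype).index = Nat.card G :=
            Subgroup.card_mul_index _
          have e2 : Nat.card L' * L'.index = Nat.card Hc := Subgroup.card_mul_index _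
          rw [hLcard] at e1
          have h5 : Nat.card L' * (L'.index * Hc.index) = Nat.card G := by
            rw [← mul_assoc, e2, e3]
          exact Nat.eq_of_mul_eq_mul_left hL'pos (e1.trans h5.symm)
        refine ⟨L'.map Hc.subtype, ?_, ?_, ?_⟩
        · intro q hq hdvd
          rw [hLcard] at hdvd
          exact hL1 q hq hdvd
        · intro q hq hdvd
          rw [hLindex] at hdvd
          rcases (Nat.Prime.dvd_mul hq).mp hdvd with h | h
          · exact hL2 q hq h
          · rw [hHindex] at h
            exact hK2 q hq h
        · have c3 : φ.toMonoidHom.comp Hc.subtype = Hc.subtype.comp φH.toMonoidHom := by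
            ext x
            exact (hφHcoe x).symm
          rw [Subgroup.map_map, c3, ← Subgroup.map_map, hL3]

/-- A finite solvable group with a fixed-point-free automorphism `φ` has a φ-invariant
Hall π-subgroup for every set of primes `π`. -/
theorem stmt_9 {G : Type*} [Group G] [Finite G] [Group.IsSolvable G] (φ : G ≃* G)
    (hfpf : ∀ g : G, φ g = g → g = 1) (π : Set ℕ) :
    ∃ H : Subgroup G,
      (∀ p : ℕ, p.Prime → p ∣ Nat.card H → p ∈ π) ∧
      (∀ p : ℕ, p.Prime → p ∣ H.index → p ∉ π) ∧
      H.map φ.toMonoidHom = H := by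
  exact hall_aux (Nat.card G) G φ hfpf le_rfl π
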